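/- Let U be a 2×2 complex unitary matrix, and let ψ : Fin 2 × Fin 2 → ℂ be defined by ψ(i,j) = U i j / √2 (the coefficients of a two-qubit maximally entangled state). Then there exists a permutation π of Fin 2 × Fin 2 such that the real matrix M with M(i,j) = |ψ(π(i,j))| has rank 1. Consequently, every two-qubit maximally entangled pure state has vanishing genuine distributed coherence, i.e., can be mapped to a product vector by an incoherent unitary. -/

import Mathlib

/-- Let `U` be a 2×2 complex unitary and let
`ψ (i,j) = U i j / √2` be the coefficients of a two-qubit maximally entangled state.
Then some permutation `π` of `Fin 2 × Fin 2` makes the matrix of moduli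
`(i,j) ↦ |ψ (π (i,j))|` have rank one; consequently, `ψ` can be mapped to a product
vector by an incoherent unitary (a permutation together with phases), i.e. every
two-qubit maximally entangled state has vanishing genuine distributed coherence. -/
theorem maximally_entangled_two_qubit_vanishing_GDC
    (U : Matrix.unitaryGroup (Fin 2) ℂ)
    (ψ : Fin 2 × Fin 2 → ℂ)
    (hψ : ∀ p : Fin 2 × Fin 2,
      ψ p = (U : Matrix (Fin 2) (Fin 2) ℂ) p.1 p.2 / (Real.sqrt 2 : ℂ)) :
    (∃ π : Equiv.Perm (Fin 2 × Fin 2),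
        (Matrix.of fun i j => ‖ψ (π (i, j))‖).rank = 1) ∧
      (∃ (π : Equiv.Perm (Fin 2 × Fin 2)) (φ : Fin 2 × Fin 2 → ℝ)
          (a b : Fin 2 → ℂ),
          ∀ p : Fin 2 × Fin 2,
            Complex.exp ((φ p : ℂ) * Complex.I) * ψ (π p) = a p.1 * b p.2) := by
  set A : Matrix (Fin 2) (Fin 2) ℂ := (U : Matrix (Fin 2) (Fin 2) ℂ) with hA
  have hU := U.2
  rw [Unitary.mem_iff] at hU
  obtain ⟨h1, h2⟩ := hU
  -- entry equations
  have e1 : Complex.normSq (A 0 0) + Complex.normSq (A 0 1) = 1 := by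
    have := congrFun (congrFun h2 0) 0
    simp [Matrix.mul_apply, Fin.sum_univ_two, Matrix.one_apply, Matrix.star_apply,
      Complex.mul_conj] at this
    exact_mod_cast this
  have e2 : Complex.normSq (A 0 1) + Complex.normSq (A 1 1) = 1 := by
    have := congrFun (congrFun h1 1) 1
    simp [Matrix.mul_apply, Fin.sum_univ_two, Matrix.one_apply, Matrix.star_apply,
      Complex.mul_conj, mul_comm] at this
    exact_mod_cast this
  have e3 : Complex.normSq (A 0 0) + Complex.normSq (A 1 0) = 1 := by
    have := congrFun (congrFun h1 0) 0
    simp [Matrix.mul_apply, Fin.sum_univ_two, Matrix.one_apply, Matrix.star_apply,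
      Complex.mul_conj, mul_comm] at this
    exact_mod_cast this
  have habs11 : ‖A 1 1‖ = ‖A 0 0‖ := by
    rw [Complex.norm_def, Complex.norm_def]
    congr 1; linarith
  have habs10 : ‖A 1 0‖ = ‖A 0 1‖ := by
    rw [Complex.norm_def, Complex.norm_def]
    congr 1; linarith
  set π : Equiv.Perm (Fin 2 × Fin 2) :=
    Equiv.swap ((1 : Fin 2), (0 : Fin 2)) ((1 : Fin 2), (1 : Fin 2)) with hπ
  set g : Fin 2 → ℝ := fun j => ‖A 0 j‖ / Real.sqrt 2 with hg
  have hs2 : ‖((Real.sqrt 2 : ℝ) : ℂ)‖ = Real.sqrt 2 := by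
    rw [Complex.norm_real, Real.norm_of_nonneg (Real.sqrt_nonneg 2)]
  have hπ00 : π (0, 0) = (0, 0) := by rw [hπ]; decide
  have hπ01 : π (0, 1) = (0, 1) := by rw [hπ]; decide
  have hπ10 : π (1, 0) = (1, 1) := by rw [hπ]; decide
  have hπ11 : π (1, 1) = (1, 0) := by rw [hπ]; decide
  have key : ∀ i j : Fin 2, ‖ψ (π (i, j))‖ = g j := by
    intro i j
    fin_cases i <;> fin_cases j
    · show ‖ψ (π (0, 0))‖ = g 0
      rw [hπ00, hψ]; simp [hg, norm_div, hs2, abs_of_nonneg (Real.sqrt_nonneg 2)]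
    · show ‖ψ (π (0, 1))‖ = g 1
      rw [hπ01, hψ]; simp [hg, norm_div, hs2, abs_of_nonneg (Real.sqrt_nonneg 2)]
    · show ‖ψ (π (1, 0))‖ = g 0
      rw [hπ10, hψ]; simp [hg, norm_div, hs2, abs_of_nonneg (Real.sqrt_nonneg 2), habs11]
    · show ‖ψ (π (1, 1))‖ = g 1
      rw [hπ11, hψ]; simp [hg, norm_div, hs2, abs_of_nonneg (Real.sqrt_nonneg 2), habs10]
  have hgne : g 0 ≠ 0 ∨ g 1 ≠ 0 := by
    by_contra h
    push_neg at h
    obtain ⟨h0, h1'⟩ := h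
    have hs2' : Real.sqrt 2 ≠ 0 := by positivity
    have z0 : A 0 0 = 0 := by simpa [hg, div_eq_zero_iff, hs2'] using h0
    have z1 : A 0 1 = 0 := by simpa [hg, div_eq_zero_iff, hs2'] using h1'
    rw [z0, z1] at e1
    simp at e1
  constructor
  · refine ⟨π, ?_⟩
    set M : Matrix (Fin 2) (Fin 2) ℝ := Matrix.of fun i j => ‖ψ (π (i, j))‖ with hM
    have hMeq : M = (Matrix.of fun (_ : Fin 2) (_ : Fin 1) => (1 : ℝ)) *
        (Matrix.of fun (_ : Fin 1) (j : Fin 2) => g j) := by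
      ext i j
      simp [hM, Matrix.mul_apply, key i j]
    have hle : M.rank ≤ 1 := by
      rw [hMeq]
      calc _ ≤ (Matrix.of fun (_ : Fin 1) (j : Fin 2) => g j).rank :=
            Matrix.rank_mul_le_right _ _
        _ ≤ Fintype.card (Fin 1) := Matrix.rank_le_card_height _
        _ = 1 := by simp
    have hpos : 1 ≤ M.rank := by
      obtain ⟨j0, hj0⟩ : ∃ j0 : Fin 2, g j0 ≠ 0 := by
        rcases hgne with h | h
        exacts [⟨0, h⟩, ⟨1, h⟩]
      rw [Nat.one_le_iff_ne_zero]
      intro hz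
      rw [Matrix.rank] at hz
      rw [Submodule.finrank_eq_zero] at hz
      have : M.mulVec (Pi.single j0 1) = 0 := by
        have hmem : M.mulVec (Pi.single j0 1) ∈ LinearMap.range M.mulVecLin :=
          ⟨Pi.single j0 1, rfl⟩
        rw [hz] at hmem
        simpa using hmem
      have := congrFun this 0
      simp [Matrix.mulVec_single, hM, key 0 j0] at this
      exact hj0 this
    omega
  · refine ⟨π, fun p => -Complex.arg (ψ (π p)), fun _ => 1,
      fun j => ((g j : ℝ) : ℂ), ?_⟩
    intro p
    have hz : ∀ z : ℂ, Complex.exp (((-Complex.arg z : ℝ) : ℂ) * Complex.I) * z =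
        ((‖z‖ : ℝ) : ℂ) := by
      intro z
      calc Complex.exp (((-Complex.arg z : ℝ) : ℂ) * Complex.I) * z
          = Complex.exp (((-Complex.arg z : ℝ) : ℂ) * Complex.I) *
            (((‖z‖ : ℝ) : ℂ) * Complex.exp ((Complex.arg z : ℂ) * Complex.I)) := by
            rw [Complex.norm_mul_exp_arg_mul_I]
        _ = ((‖z‖ : ℝ) : ℂ) *
            Complex.exp (((-Complex.arg z : ℝ) : ℂ) * Complex.I +
              (Complex.arg z : ℂ) * Complex.I) := by
            rw [Complex.exp_add]; ring
        _ = ((‖z‖ : ℝ) : ℂ) := by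
            have h0 : ((-Complex.arg z : ℝ) : ℂ) * Complex.I +
                (Complex.arg z : ℂ) * Complex.I = 0 := by push_cast; ring
            rw [h0, Complex.exp_zero, mul_one]
    rw [hz]
    have : ‖ψ (π p)‖ = g p.2 := by
      obtain ⟨i, j⟩ := p; exact key i j
    rw [this, one_mul]
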